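/- Let I ≥ 2 be an integer, set β := (I+1 − log(I+1))/(I+1 + log(I+1)) where log is the natural logarithm, and let k be an integer with 1 ≤ k ≤ ⌊I/2⌋. Let W_k, …, W_I be independent square-integrable real random variables on a probability space, all with the same mean m and with E[(W_i − m)²] ≤ σ² for every i, for some σ ≥ 0. Define Q := β^{I−k} W_k + (1−β) Σ_{i=k+1}^{I} β^{I−i} W_i. Then E[(Q − m)²] ≤ (4 log(I+1)/(I+1)) · σ². -/

import Mathlib

open MeasureTheory ProbabilityTheory

/-- `log A ≤ √A` for `0 ≤ A`. -/
lemma aux_log_le_sqrt {A : ℝ} (hA : 0 ≤ A) : Real.log A ≤ Real.sqrt A := by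
  rcases eq_or_lt_of_le hA with h | hApos
  · simp [← h]
  set s := Real.sqrt (Real.sqrt A) with hs
  have hs0 : 0 < s := Real.sqrt_pos.2 (Real.sqrt_pos.2 hApos)
  have hlogs : Real.log s = Real.log A / 2 / 2 := by
    rw [hs, Real.log_sqrt (Real.sqrt_nonneg A), Real.log_sqrt hA]
  have h1 : Real.log s ≤ s - 1 := Real.log_le_sub_one_of_pos hs0
  have hsq : s ^ 2 = Real.sqrt A := Real.sq_sqrt (Real.sqrt_nonneg A)
  nlinarith [sq_nonneg (s - 2), Real.sqrt_nonneg A]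

/-- The key analytic bound. -/
lemma aux_key (A : ℝ) (hA : 3 ≤ A) (n : ℕ) (hn : (A - 1) / 2 ≤ (n : ℝ)) :
    ((A - Real.log A) / (A + Real.log A)) ^ n ≤ 4 * Real.log A / A := by
  set L := Real.log A with hL
  have hApos : (0:ℝ) < A := by linarith
  have hL1 : 1 < L := by
    rw [hL, Real.lt_log_iff_exp_lt hApos]
    calc Real.exp 1 < 2.7182818286 := Real.exp_one_lt_d9
    _ < 3 := by norm_num
    _ ≤ A := hA
  have hLpos : 0 < L := by linarith
  have hLlt : L < A := by
    have := Real.log_le_sub_one_of_pos hApos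
    linarith
  have hLsq : L ^ 2 ≤ A := by
    have h1 : L ≤ Real.sqrt A := aux_log_le_sqrt hApos.le
    have h2 : Real.sqrt A ^ 2 = A := Real.sq_sqrt hApos.le
    nlinarith [Real.sqrt_nonneg A]
  have hden : 0 < A + L := by linarith
  set t : ℝ := 2 * L / (A + L) with ht
  have htpos : 0 < t := by positivity
  have hβt : (A - L) / (A + L) = 1 - t := by
    rw [ht, eq_sub_iff_add_eq]; field_simp; ring
  have hβ0 : 0 ≤ (A - L) / (A + L) := div_nonneg (by linarith) hden.le
  have hstep1 : ((A - L) / (A + L)) ^ n ≤ Real.exp (-t) ^ n := by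
    apply pow_le_pow_left₀ hβ0
    rw [hβt]
    have := Real.add_one_le_exp (-t)
    linarith
  have hstep2 : Real.exp (-t) ^ n = Real.exp (-(t * n)) := by
    rw [← Real.exp_nat_mul]; ring_nf
  have hstep3 : Real.exp (-(t * n)) ≤ Real.exp (-(t * ((A - 1) / 2))) := by
    apply Real.exp_le_exp.2
    have : t * ((A - 1) / 2) ≤ t * n := by
      apply mul_le_mul_of_nonneg_left hn htpos.le
    linarith
  have hRHSpos : 0 < 4 * L / A := by positivity
  have hstep4 : Real.exp (-(t * ((A - 1) / 2))) ≤ 4 * L / A := by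
    rw [← Real.exp_log hRHSpos, Real.exp_le_exp]
    have hlog : Real.log (4 * L / A) = Real.log (4 * L) - L := by
      rw [Real.log_div (by positivity) (by positivity), hL]
    rw [hlog]
    have h4L : 1 ≤ Real.log (4 * L) := by
      rw [Real.le_log_iff_exp_le (by positivity)]
      calc Real.exp 1 ≤ 2.7182818286 := Real.exp_one_lt_d9.le
      _ ≤ 4 * L := by nlinarith
    have hfrac : L * (L + 1) / (A + L) ≤ 1 := by
      rw [div_le_one hden]; nlinarith
    have hexpand : -(t * ((A - 1) / 2)) = -L + L * (L + 1) / (A + L) := by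
      rw [ht]; field_simp; ring
    rw [hexpand]
    linarith
  calc ((A - L) / (A + L)) ^ n ≤ Real.exp (-t) ^ n := hstep1
  _ = Real.exp (-(t * n)) := hstep2
  _ ≤ Real.exp (-(t * ((A - 1) / 2))) := hstep3
  _ ≤ 4 * L / A := hstep4

/-- Geometric reindexing. -/
lemma aux_geom_sum (β : ℝ) (k I : ℕ) :
    ∑ i ∈ Finset.Icc (k + 1) I, β ^ (I - i) = ∑ j ∈ Finset.range (I - k), β ^ j := by
  rw [← Finset.Ico_add_one_right_eq_Icc, Finset.sum_Ico_eq_sum_range]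
  have h : I + 1 - (k + 1) = I - k := by omega
  rw [h, ← Finset.sum_range_reflect]
  apply Finset.sum_congr rfl
  intro j hj
  rw [Finset.mem_range] at hj
  congr 1
  omega

/-- Variance bound for the geometric convex combination
`Q = β^{I-k} W_k + (1-β) Σ_{i=k+1}^{I} β^{I-i} W_i` with
`β = (I+1 - log(I+1))/(I+1 + log(I+1))`:
`E[(Q - m)²] ≤ 4 log(I+1)/(I+1) · σ²`. -/
theorem stmt5 {Ω : Type*} [MeasurableSpace Ω] {μ : Measure Ω}
    [IsProbabilityMeasure μ]
    (I : ℕ) (hI : 2 ≤ I)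
    (β : ℝ)
    (hβ : β = ((I : ℝ) + 1 - Real.log ((I : ℝ) + 1))
        / ((I : ℝ) + 1 + Real.log ((I : ℝ) + 1)))
    (k : ℕ) (hk1 : 1 ≤ k) (hk2 : k ≤ I / 2)
    (W : ℕ → Ω → ℝ)
    (hWmeas : ∀ i, k ≤ i → i ≤ I → Measurable (W i))
    (hindep : iIndepFun
      (fun i : {x // x ∈ Finset.Icc k I} => W i.1) μ)
    (m σ : ℝ) (hσ : 0 ≤ σ)
    (hW2 : ∀ i, k ≤ i → i ≤ I → MemLp (W i) 2 μ)
    (hWmean : ∀ i, k ≤ i → i ≤ I → (∫ ω, W i ω ∂μ) = m)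
    (hWvar : ∀ i, k ≤ i → i ≤ I → (∫ ω, (W i ω - m) ^ 2 ∂μ) ≤ σ ^ 2) :
    (∫ ω, ((β ^ (I - k) * W k ω
        + (1 - β) * ∑ i ∈ Finset.Icc (k + 1) I, β ^ (I - i) * W i ω) - m) ^ 2 ∂μ)
      ≤ (4 * Real.log ((I : ℝ) + 1) / ((I : ℝ) + 1)) * σ ^ 2 := by
  classical
  set A : ℝ := (I : ℝ) + 1 with hA
  set L : ℝ := Real.log A with hL
  have hA3 : (3:ℝ) ≤ A := by
    rw [hA]
    have : (2:ℝ) ≤ (I:ℝ) := by exact_mod_cast hI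
    linarith
  have hApos : (0:ℝ) < A := by linarith
  have hL1 : 1 < L := by
    rw [hL, Real.lt_log_iff_exp_lt hApos]
    calc Real.exp 1 < 2.7182818286 := Real.exp_one_lt_d9
    _ < 3 := by norm_num
    _ ≤ A := hA3
  have hLpos : 0 < L := by linarith
  have hLlt : L < A := by
    have := Real.log_le_sub_one_of_pos hApos
    linarith
  have hden : 0 < A + L := by linarith
  have hβ0 : 0 ≤ β := by rw [hβ]; exact div_nonneg (by linarith) hden.le
  have hβ1 : β < 1 := by
    rw [hβ, div_lt_one hden]; linarith
  have h1β : 1 - β = 2 * L / (A + L) := by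
    rw [hβ]; field_simp; ring
  have hkI : k ≤ I := le_trans hk2 (Nat.div_le_self I 2)
  have h2k : 2 * k ≤ I := by omega
  set M : ℝ := 4 * L / A with hM
  -- coefficients
  set g : ℕ → ℝ := fun i => if i = k then β ^ (I - k) else (1 - β) * β ^ (I - i) with hg
  have hg_nonneg : ∀ i, 0 ≤ g i := by
    intro i
    rw [hg]
    dsimp only
    split
    · positivity
    · have : 0 ≤ 1 - β := by linarith
      positivity
  -- bound on g k
  have hβpow : β ^ (I - k) ≤ M := by
    have hn : (A - 1) / 2 ≤ ((I - k : ℕ) : ℝ) := by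
      have : ((I - k : ℕ) : ℝ) = (I : ℝ) - (k : ℝ) := by
        rw [Nat.cast_sub hkI]
      rw [this, hA]
      have hc : ((2 * k : ℕ) : ℝ) ≤ (I : ℝ) := by exact_mod_cast h2k
      push_cast at hc
      linarith
    have := aux_key A hA3 (I - k) hn
    rw [hβ, hA, hL] at *
    convert this using 2
  have hg_le : ∀ i, g i ≤ M := by
    intro i
    rw [hg]
    dsimp only
    split
    · exact hβpow
    · have hp1 : β ^ (I - i) ≤ 1 := pow_le_one₀ hβ0 hβ1.le
      have h1βn : 0 ≤ 1 - β := by linarith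
      calc (1 - β) * β ^ (I - i) ≤ (1 - β) * 1 := by
            exact mul_le_mul_of_nonneg_left hp1 h1βn
      _ = 2 * L / (A + L) := by rw [mul_one, h1β]
      _ ≤ 4 * L / A := by
            rw [div_le_div_iff₀ hden hApos]; nlinarith
  -- sum of coefficients is 1
  have hsplit : Finset.Icc k I = insert k (Finset.Icc (k + 1) I) := by
    ext i
    simp only [Finset.mem_Icc, Finset.mem_insert]
    omega
  have hknotin : k ∉ Finset.Icc (k + 1) I := by
    simp only [Finset.mem_Icc]; omega
  have hgeom : ∑ i ∈ Finset.Icc (k + 1) I, β ^ (I - i)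
      = (β ^ (I - k) - 1) / (β - 1) := by
    rw [aux_geom_sum, geom_sum_eq (by linarith : β ≠ 1)]
  have hsum_g : ∑ i ∈ Finset.Icc k I, g i = 1 := by
    rw [hsplit, Finset.sum_insert hknotin]
    have h1 : g k = β ^ (I - k) := by rw [hg]; simp
    have h2 : ∑ i ∈ Finset.Icc (k + 1) I, g i
        = (1 - β) * ∑ i ∈ Finset.Icc (k + 1) I, β ^ (I - i) := by
      rw [Finset.mul_sum]
      apply Finset.sum_congr rfl
      intro i hi
      rw [Finset.mem_Icc] at hi
      have : i ≠ k := by omega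
      rw [hg]; simp [this]
    rw [h1, h2, hgeom]
    have hβne : β - 1 ≠ 0 := by intro h; apply absurd hβ1; linarith [sub_eq_zero.1 h]
    field_simp
    ring
  -- centered scaled variables
  set X : ℕ → Ω → ℝ := fun i ω => g i * (W i ω - m) with hX
  have hXmem : ∀ i ∈ Finset.Icc k I, MemLp (X i) 2 μ := by
    intro i hi
    rw [Finset.mem_Icc] at hi
    exact ((hW2 i hi.1 hi.2).sub (memLp_const m)).const_mul (g i)
  have hXintble : ∀ i ∈ Finset.Icc k I, Integrable (X i) μ := by
    intro i hi
    exact (hXmem i hi).integrable one_le_two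
  have hXint : ∀ i ∈ Finset.Icc k I, (∫ ω, X i ω ∂μ) = 0 := by
    intro i hi
    rw [Finset.mem_Icc] at hi
    have hint : Integrable (W i) μ := (hW2 i hi.1 hi.2).integrable one_le_two
    rw [hX]
    simp only
    rw [integral_const_mul, integral_sub hint (integrable_const m),
      integral_const, probReal_univ, smul_eq_mul, one_mul,
      hWmean i hi.1 hi.2, sub_self, mul_zero]
  -- pointwise identity
  have hpt : ∀ ω, (β ^ (I - k) * W k ω
      + (1 - β) * ∑ i ∈ Finset.Icc (k + 1) I, β ^ (I - i) * W i ω) - m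
      = ∑ i ∈ Finset.Icc k I, X i ω := by
    intro ω
    have h1 : ∑ i ∈ Finset.Icc k I, X i ω
        = (∑ i ∈ Finset.Icc k I, g i * W i ω) - (∑ i ∈ Finset.Icc k I, g i) * m := by
      rw [Finset.sum_mul, ← Finset.sum_sub_distrib]
      apply Finset.sum_congr rfl
      intro i _
      rw [hX]; ring
    rw [h1, hsum_g, one_mul]
    congr 1
    rw [hsplit, Finset.sum_insert hknotin]
    have h2 : g k = β ^ (I - k) := by rw [hg]; simp
    have h3 : ∑ i ∈ Finset.Icc (k + 1) I, g i * W i ω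
        = (1 - β) * ∑ i ∈ Finset.Icc (k + 1) I, β ^ (I - i) * W i ω := by
      rw [Finset.mul_sum]
      apply Finset.sum_congr rfl
      intro i hi
      rw [Finset.mem_Icc] at hi
      have : i ≠ k := by omega
      rw [hg]; simp [this]; ring
    rw [h2, h3]
  -- sum function
  set S : Ω → ℝ := ∑ i ∈ Finset.Icc k I, X i with hS
  have hSmem : MemLp S 2 μ := memLp_finset_sum' _ hXmem
  have hSint : (∫ ω, S ω ∂μ) = 0 := by
    rw [hS]
    simp only [Finset.sum_apply]
    rw [integral_finset_sum _ hXintble]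
    exact Finset.sum_eq_zero hXint
  -- pairwise independence of the X's
  have hpair : Set.Pairwise ↑(Finset.Icc k I) fun i j => IndepFun (X i) (X j) μ := by
    intro i hi j hj hij
    rw [Finset.mem_coe] at hi hj
    have hWij : IndepFun (W i) (W j) μ := by
      have := hindep.indepFun
        (i := (⟨i, hi⟩ : {x // x ∈ Finset.Icc k I}))
        (j := (⟨j, hj⟩ : {x // x ∈ Finset.Icc k I}))
        (by simp [hij])
      exact this
    have hmi : Measurable (fun x : ℝ => g i * (x - m)) :=
      (measurable_id.sub_const m).const_mul (g i)
    have hmj : Measurable (fun x : ℝ => g j * (x - m)) :=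
      (measurable_id.sub_const m).const_mul (g j)
    exact hWij.comp hmi hmj
  -- variance identity
  have hvar : (∫ ω, (S ω) ^ 2 ∂μ) = ∑ i ∈ Finset.Icc k I, variance (X i) μ := by
    rw [← IndepFun.variance_sum hXmem hpair, ← hS]
    rw [variance_of_integral_eq_zero hSmem.aestronglyMeasurable.aemeasurable hSint]
  -- per-term bound
  have hterm : ∀ i ∈ Finset.Icc k I, variance (X i) μ ≤ g i ^ 2 * σ ^ 2 := by
    intro i hi
    rw [variance_of_integral_eq_zero (hXmem i hi).aestronglyMeasurable.aemeasurable (hXint i hi)]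
    have : (∫ ω, (X i ω) ^ 2 ∂μ) = g i ^ 2 * ∫ ω, (W i ω - m) ^ 2 ∂μ := by
      rw [← integral_const_mul]
      apply integral_congr_ae
      filter_upwards with ω
      rw [hX]; ring
    have heq : μ[(X i) ^ (2:ℕ)] = (∫ ω, (X i ω) ^ 2 ∂μ) := rfl
    rw [this]
    rw [Finset.mem_Icc] at hi
    exact mul_le_mul_of_nonneg_left (hWvar i hi.1 hi.2) (sq_nonneg _)
  -- put it together
  have hmain : (∫ ω, (S ω) ^ 2 ∂μ) ≤ M * σ ^ 2 := by
    rw [hvar]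
    calc ∑ i ∈ Finset.Icc k I, variance (X i) μ
        ≤ ∑ i ∈ Finset.Icc k I, g i ^ 2 * σ ^ 2 := Finset.sum_le_sum hterm
    _ = (∑ i ∈ Finset.Icc k I, g i ^ 2) * σ ^ 2 := by rw [Finset.sum_mul]
    _ ≤ (∑ i ∈ Finset.Icc k I, M * g i) * σ ^ 2 := by
        apply mul_le_mul_of_nonneg_right _ (sq_nonneg σ)
        apply Finset.sum_le_sum
        intro i _
        calc g i ^ 2 = g i * g i := sq (g i) ▸ by ring
        _ ≤ M * g i := mul_le_mul_of_nonneg_right (hg_le i) (hg_nonneg i)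
    _ = M * σ ^ 2 := by rw [← Finset.mul_sum, hsum_g, mul_one]
  calc (∫ ω, ((β ^ (I - k) * W k ω
        + (1 - β) * ∑ i ∈ Finset.Icc (k + 1) I, β ^ (I - i) * W i ω) - m) ^ 2 ∂μ)
      = (∫ ω, (S ω) ^ 2 ∂μ) := by
        apply integral_congr_ae
        filter_upwards with ω
        rw [hpt ω, hS]
        simp [Finset.sum_apply]
    _ ≤ M * σ ^ 2 := hmain
    _ = (4 * Real.log ((I : ℝ) + 1) / ((I : ℝ) + 1)) * σ ^ 2 := by rw [hM, hL, hA]
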